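/- arXiv:2002.03330 — 7 statements merged into one kernel-verified Lean document; each statement's English description precedes it below -/
import Mathlib

section
/- Let G and H be finite groups such that no nontrivial subquotient of G is isomorphic to a subquotient of H. If ⟨g₁,g₂⟩ = G and ⟨h₁,h₂⟩ = H, then ⟨(g₁,h₁),(g₂,h₂)⟩ = G × H. -/
open SimpleGraph

/-- The generating graph of a group: `g ~ h` iff `g ≠ h` and `⟨g,h⟩ = G`. -/
def genGraph (G : Type*) [Group G] : SimpleGraph G where
  Adj g h := g ≠ h ∧ Subgroup.closure {g, h} = ⊤
  symm := ⟨by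
    rintro g h ⟨hne, hgen⟩
    exact ⟨hne.symm, by rwa [Set.pair_comm]⟩⟩
  loopless := ⟨fun g h => h.1 rfl⟩

/-- A group is 2-generated if it is generated by two elements. -/
def TwoGenerated (G : Type*) [Group G] : Prop :=
  ∃ x y : G, Subgroup.closure {x, y} = ⊤

/-- The set of non-isolated vertices of the generating graph. -/
def nonIso (G : Type*) [Group G] : Set G := {g | ∃ h, (genGraph G).Adj g h}

/-- `Δ(G)`: the generating graph with isolated vertices removed. -/
def deltaGraph (G : Type*) [Group G] : SimpleGraph (nonIso G) :=
  (genGraph G).induce (nonIso G)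

lemma comap_top_normal {G : Type*} [Group G] (N : Subgroup G) [N.Normal] :
    (N.comap (⊤ : Subgroup G).subtype).Normal :=
  Subgroup.Normal.comap inferInstance _

noncomputable def topQuotEquiv {G : Type*} [Group G] (N : Subgroup G) [N.Normal]
    [(N.comap (⊤ : Subgroup G).subtype).Normal] :
    (G ⧸ N) ≃* ((⊤ : Subgroup G) ⧸ N.comap (⊤ : Subgroup G).subtype) :=
  QuotientGroup.congr N _ Subgroup.topEquiv.symm (by
    ext x
    simp only [Subgroup.mem_map, Subgroup.mem_comap]
    constructor
    · rintro ⟨y, hy, rfl⟩; exact hy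
    · intro hx; exact ⟨(x : G), hx, rfl⟩)


theorem stmt_3 (G H : Type*) [Group G] [Group H] [Finite G] [Finite H]
    (hsq : ∀ (A : Subgroup G) (B : Subgroup H) (NA : Subgroup A) (NB : Subgroup B)
      [NA.Normal] [NB.Normal], Nontrivial (A ⧸ NA) → IsEmpty ((A ⧸ NA) ≃* (B ⧸ NB)))
    (g₁ g₂ : G) (h₁ h₂ : H)
    (hg : Subgroup.closure {g₁, g₂} = ⊤) (hh : Subgroup.closure {h₁, h₂} = ⊤) :
    Subgroup.closure {(g₁, h₁), (g₂, h₂)} = ⊤ := by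
  set I := Subgroup.closure {(g₁, h₁), (g₂, h₂)} with hI
  have hmapfst : I.map (MonoidHom.fst G H) = ⊤ := by
    rw [hI, MonoidHom.map_closure]
    convert hg using 2
    ext x; simp [eq_comm]
  have hmapsnd : I.map (MonoidHom.snd G H) = ⊤ := by
    rw [hI, MonoidHom.map_closure]
    convert hh using 2
    ext x; simp [eq_comm]
  have hI₁ : Function.Surjective (Prod.fst ∘ I.subtype) := by
    have : ((MonoidHom.fst G H).comp I.subtype).range = ⊤ := by
      rw [MonoidHom.range_comp, Subgroup.range_subtype, hmapfst]
    exact MonoidHom.range_eq_top.mp this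
  have hI₂ : Function.Surjective (Prod.snd ∘ I.subtype) := by
    have : ((MonoidHom.snd G H).comp I.subtype).range = ⊤ := by
      rw [MonoidHom.range_comp, Subgroup.range_subtype, hmapsnd]
    exact MonoidHom.range_eq_top.mp this
  have hN₁ := Subgroup.normal_goursatFst hI₁
  have hN₂ := Subgroup.normal_goursatSnd hI₂
  obtain ⟨e, -⟩ := Subgroup.goursat_surjective hI₁ hI₂
  -- show goursatFst = ⊤
  have htriv : ¬ Nontrivial (G ⧸ I.goursatFst) := by
    intro hnt
    haveI hNAnorm := comap_top_normal I.goursatFst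
    haveI hNBnorm := comap_top_normal I.goursatSnd
    set NA := I.goursatFst.comap (⊤ : Subgroup G).subtype
    set NB := I.goursatSnd.comap (⊤ : Subgroup H).subtype
    have eA := topQuotEquiv I.goursatFst
    have eB := topQuotEquiv I.goursatSnd
    haveI := hnt
    have hnt' : Nontrivial ((⊤ : Subgroup G) ⧸ NA) := eA.symm.toEquiv.nontrivial
    exact (hsq ⊤ ⊤ NA NB hnt').false (eA.symm.trans (e.trans eB))
  have hfst_top : I.goursatFst = ⊤ := by
    have hsub : Subsingleton (G ⧸ I.goursatFst) := not_nontrivial_iff_subsingleton.mp htriv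
    ext g
    simp only [Subgroup.mem_top, iff_true]
    have : (g : G ⧸ I.goursatFst) = ((1 : G) : G ⧸ I.goursatFst) := Subsingleton.elim _ _
    simpa [QuotientGroup.eq_one_iff] using this
  have hsnd_top : I.goursatSnd = ⊤ := by
    have : Subsingleton (H ⧸ I.goursatSnd) := by
      rcases subsingleton_or_nontrivial (H ⧸ I.goursatSnd) with h | h
      · exact h
      · haveI := h
        exact absurd e.toEquiv.nontrivial htriv
    ext h
    simp only [Subgroup.mem_top, iff_true]
    have h1 : (h : H ⧸ I.goursatSnd) = ((1 : H) : H ⧸ I.goursatSnd) := Subsingleton.elim _ _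
    simpa [QuotientGroup.eq_one_iff] using h1
  have : (⊤ : Subgroup (G × H)) ≤ I := by
    intro x _
    have := Subgroup.goursatFst_prod_goursatSnd_le (I := I)
    apply this
    simp [hfst_top, hsnd_top, Subgroup.mem_prod]
  exact le_antisymm le_top this
end

section
/- Let p be a prime and G be a finite nilpotent group whose Sylow p-subgroup is noncyclic but 2-generated. Then the number of elements g ∈ G such that there exists h ∈ G with ⟨g,h⟩ = G is at most |G|(1 - 1/p²). -/
open SimpleGraph

section Auxiliary

open Subgroup Pointwise

variable (p : ℕ) {H : Type*} [Group H]

def pNSet (H : Type*) [Group H] : Set H :=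
  {x | (∃ a b : H, x = a * b * a⁻¹ * b⁻¹) ∨ ∃ y : H, x = y ^ p}

variable {H : Type*} [Group H]

lemma coatom_subgroups [Finite H] {K : Subgroup H} (hK : IsCoatom K) (hN : K.Normal)
    (A : Subgroup (H ⧸ K)) : A = ⊥ ∨ A = ⊤ := by
  set B := A.comap (QuotientGroup.mk' K) with hB
  have hKB : K ≤ B := by
    intro k hk
    simp only [hB, mem_comap]
    have : (QuotientGroup.mk' K) k = 1 := (QuotientGroup.eq_one_iff k).mpr hk
    rw [this]; exact one_mem A
  have hA : A = B.map (QuotientGroup.mk' K) :=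
    (Subgroup.map_comap_eq_self_of_surjective (QuotientGroup.mk'_surjective K) A).symm
  rcases eq_or_lt_of_le hKB with heq | hlt
  · left
    rw [hA, ← heq]
    ext x
    simp only [mem_map, Subgroup.mem_bot]
    constructor
    · rintro ⟨k, hk, rfl⟩
      exact (QuotientGroup.eq_one_iff k).mpr hk
    · rintro rfl
      exact ⟨1, one_mem K, map_one _⟩
  · right
    rw [hA, hK.2 B hlt]
    exact Subgroup.map_top_of_surjective _ (QuotientGroup.mk'_surjective K)

lemma pNSet_subset_coatom [Finite H] [Fact p.Prime] (hH : IsPGroup p H)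
    {K : Subgroup H} (hK : IsCoatom K) : pNSet p H ⊆ K := by
  have hp := (Fact.out : p.Prime)
  have hN : K.Normal := by
    have h02 := (isNilpotent_of_finite_tfae (G := H)).out 0 2
    exact (h02.mp hH.isNilpotent) K hK
  have hQ : IsPGroup p (H ⧸ K) := hH.to_quotient K
  -- every element of the quotient has p-th power 1
  have hexp : ∀ g : H ⧸ K, g ^ p = 1 := by
    intro g
    by_cases hg1 : g = 1
    · simp [hg1]
    rcases coatom_subgroups hK hN (zpowers (g ^ p)) with hbot | htop
    · have : g ^ p ∈ zpowers (g ^ p) := mem_zpowers _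
      rw [hbot] at this
      simpa using this
    · exfalso
      have hmem : g ∈ zpowers (g ^ p) := htop ▸ mem_top g
      rw [← mem_powers_iff_mem_zpowers] at hmem
      obtain ⟨n, hn⟩ := hmem
      simp only at hn
      rcases Nat.eq_zero_or_pos n with rfl | hn0
      · rw [pow_zero] at hn; exact hg1 hn.symm
      have hpn : 1 ≤ p * n := Nat.one_le_iff_ne_zero.mpr
        (Nat.mul_ne_zero hp.pos.ne' hn0.ne')
      have hord : orderOf g ∣ p * n - 1 := by
        apply orderOf_dvd_of_pow_eq_one
        rw [← pow_mul] at hn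
        calc g ^ (p * n - 1) = g ^ (p * n) * (g ^ 1)⁻¹ := by rw [← pow_sub g hpn]
        _ = 1 := by rw [hn, pow_one, mul_inv_cancel]
      have hpord : p ∣ orderOf g := by
        obtain ⟨k, hk⟩ := hQ g
        have h1 : orderOf g ∣ p ^ k := orderOf_dvd_of_pow_eq_one hk
        obtain ⟨j, hjk, hj⟩ := (Nat.dvd_prime_pow hp).mp h1
        rcases Nat.eq_zero_or_pos j with rfl | hj0
        · rw [pow_zero] at hj
          exact absurd (orderOf_eq_one_iff.mp hj) hg1
        · rw [hj]; exact dvd_pow_self p hj0.ne'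
      have h1 : p ∣ p * n - (p * n - 1) := Nat.dvd_sub (dvd_mul_right p n) (hpord.trans hord)
      rw [Nat.sub_sub_self hpn] at h1
      exact Nat.Prime.one_lt hp |>.ne' (Nat.eq_one_of_dvd_one h1 ▸ rfl) |>.elim
  -- the quotient is cyclic, hence abelian
  obtain ⟨x₀, hx₀⟩ : ∃ x : H, x ∉ K := by
    by_contra hall
    push_neg at hall
    exact hK.1 (Subgroup.eq_top_iff' K |>.mpr hall)
  set g₀ : H ⧸ K := QuotientGroup.mk x₀ with hg₀
  have hg₀1 : g₀ ≠ 1 := fun h => hx₀ ((QuotientGroup.eq_one_iff x₀).mp h)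
  have hgen : zpowers g₀ = ⊤ := by
    rcases coatom_subgroups hK hN (zpowers g₀) with hbot | htop
    · exact absurd (hbot ▸ mem_zpowers g₀) (by simpa using hg₀1)
    · exact htop
  have hcomm : ∀ a b : H ⧸ K, a * b = b * a := by
    intro a b
    have ha : a ∈ zpowers g₀ := hgen ▸ mem_top a
    have hb : b ∈ zpowers g₀ := hgen ▸ mem_top b
    obtain ⟨m, rfl⟩ := ha
    obtain ⟨n, rfl⟩ := hb
    exact (Commute.zpow_zpow_self g₀ m n)
  rintro x (⟨a, b, rfl⟩ | ⟨y, rfl⟩)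
  · rw [SetLike.mem_coe, ← QuotientGroup.eq_one_iff]
    have : ((a * b * a⁻¹ * b⁻¹ : H) : H ⧸ K)
        = (a : H ⧸ K) * b * (a : H ⧸ K)⁻¹ * (b : H ⧸ K)⁻¹ := by
      simp [QuotientGroup.mk_mul, QuotientGroup.mk_inv]
    rw [this, hcomm (a : H ⧸ K) (b : H ⧸ K)]
    group
  · rw [SetLike.mem_coe, ← QuotientGroup.eq_one_iff]
    rw [QuotientGroup.mk_pow]
    exact hexp _

instance pNSet_normal : (Subgroup.closure (pNSet p H)).Normal := by
  constructor
  intro n hn g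
  have key : ∀ x ∈ pNSet p H, g * x * g⁻¹ ∈ closure (pNSet p H) := by
    rintro x (⟨a, b, rfl⟩ | ⟨y, rfl⟩)
    · refine subset_closure (Or.inl ⟨g * a * g⁻¹, g * b * g⁻¹, by group⟩)
    · refine subset_closure (Or.inr ⟨g * y * g⁻¹, by rw [conj_pow]⟩)
  induction hn using closure_induction with
  | mem x hx => exact key x hx
  | one => simpa using one_mem _
  | mul x y _ _ hx hy =>
      have : g * (x * y) * g⁻¹ = (g * x * g⁻¹) * (g * y * g⁻¹) := by group
      rw [this]; exact mul_mem hx hy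
  | inv x _ hx =>
      have : g * x⁻¹ * g⁻¹ = (g * x * g⁻¹)⁻¹ := by group
      rw [this]; exact inv_mem hx

lemma pNClosure_le_frattini [Finite H] [Fact p.Prime] (hH : IsPGroup p H) :
    closure (pNSet p H) ≤ frattini H := by
  rw [frattini, Order.radical]
  exact le_iInf₂ fun K hK => (closure_le _).mpr (pNSet_subset_coatom p hH hK)

lemma burnside_basis [Finite H] [Fact p.Prime] (hH : IsPGroup p H)
    (hcyc : IsCyclic (H ⧸ closure (pNSet p H))) : IsCyclic H := by
  obtain ⟨v, hv⟩ := hcyc.exists_generator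
  obtain ⟨x', rfl⟩ := QuotientGroup.mk_surjective v
  have hsup : zpowers x' ⊔ closure (pNSet p H) = ⊤ := by
    rw [eq_top_iff]
    intro g _
    obtain ⟨n, hn⟩ := hv (QuotientGroup.mk g)
    have hmk : ((x' ^ n : H) : H ⧸ closure (pNSet p H)) = (g : H ⧸ closure (pNSet p H)) := by
      rw [QuotientGroup.mk_zpow]; exact hn
    have h2 : (x' ^ n)⁻¹ * g ∈ closure (pNSet p H) := QuotientGroup.eq.mp hmk
    have h3 : g = x' ^ n * ((x' ^ n)⁻¹ * g) := by group
    rw [h3]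
    exact mul_mem ((le_sup_left : zpowers x' ≤ _) ⟨n, rfl⟩)
      ((le_sup_right : closure (pNSet p H) ≤ _) h2)
  have hfrat : zpowers x' ⊔ frattini H = ⊤ := by
    rw [eq_top_iff, ← hsup]
    exact sup_le_sup_left (pNClosure_le_frattini p hH) _
  have htop := frattini_nongenerating hfrat
  refine ⟨x', fun y => ?_⟩
  have hy : y ∈ zpowers x' := by rw [htop]; exact mem_top y
  exact hy

lemma pNQuotient_comm (a b : H ⧸ closure (pNSet p H)) : a * b = b * a := by
  obtain ⟨g, rfl⟩ := QuotientGroup.mk_surjective a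
  obtain ⟨h, rfl⟩ := QuotientGroup.mk_surjective b
  show ((g * h : H) : H ⧸ closure (pNSet p H)) = ((h * g : H) : _)
  rw [QuotientGroup.eq]
  exact subset_closure (Or.inl ⟨h⁻¹, g⁻¹, by group⟩)

lemma card_pNQuotient_le [Finite H] (hp : 0 < p) {x y : H}
    (hxy : closure {x, y} = ⊤) :
    Nat.card (H ⧸ closure (pNSet p H)) ≤ p * p := by
  set M := closure (pNSet p H) with hM
  set π := QuotientGroup.mk' M with hπ
  have hpow : ∀ z : H ⧸ M, z ^ p = 1 := by
    intro z
    obtain ⟨g, rfl⟩ := QuotientGroup.mk_surjective z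
    show ((g ^ p : H) : H ⧸ M) = 1
    rw [QuotientGroup.eq_one_iff]
    exact subset_closure (Or.inr ⟨g, rfl⟩)
  have hord : ∀ z : H ⧸ M, orderOf z ≤ p :=
    fun z => Nat.le_of_dvd hp (orderOf_dvd_of_pow_eq_one (hpow z))
  have htop : zpowers (π x) ⊔ zpowers (π y) = ⊤ := by
    have h1 := congrArg (Subgroup.map π) hxy
    rw [MonoidHom.map_closure, Set.image_pair,
      Subgroup.map_top_of_surjective _ (QuotientGroup.mk'_surjective M)] at h1
    rw [zpowers_eq_closure, zpowers_eq_closure, ← Subgroup.closure_union,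
      Set.singleton_union]
    exact h1
  haveI hnormal : (zpowers (π y)).Normal := by
    constructor
    intro n hn g
    have : g * n * g⁻¹ = n := by rw [pNQuotient_comm p g n]; group
    rw [this]; exact hn
  have hset : ((zpowers (π x) ⊔ zpowers (π y) : Subgroup (H ⧸ M)) : Set (H ⧸ M))
      = (zpowers (π x) : Set (H ⧸ M)) * (zpowers (π y) : Set (H ⧸ M)) :=
    Subgroup.mul_normal _ _
  calc Nat.card (H ⧸ M) = Nat.card (⊤ : Subgroup (H ⧸ M)) := (Subgroup.card_top).symm
    _ = Nat.card (zpowers (π x) ⊔ zpowers (π y) : Subgroup (H ⧸ M)) := by rw [htop]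
    _ = Nat.card ((zpowers (π x) : Set (H ⧸ M)) * (zpowers (π y) : Set (H ⧸ M)) : Set (H ⧸ M)) := by
        rw [← hset]; rfl
    _ ≤ Nat.card (zpowers (π x)) * Nat.card (zpowers (π y)) := Set.natCard_mul_le
    _ = orderOf (π x) * orderOf (π y) := by rw [Nat.card_zpowers, Nat.card_zpowers]
    _ ≤ p * p := Nat.mul_le_mul (hord _) (hord _)

end Auxiliary

theorem stmt_6 (p : ℕ) [Fact p.Prime] (G : Type*) [Group G] [Finite G]
    (hnil : Group.IsNilpotent G) (P : Sylow p G)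
    (hnc : ¬ IsCyclic (P : Subgroup G)) (h2P : TwoGenerated (P : Subgroup G)) :
    Nat.card {g : G | ∃ h : G, Subgroup.closure {g, h} = ⊤} * p ^ 2
      ≤ Nat.card G * (p ^ 2 - 1) := by
  classical
  have hp : p.Prime := Fact.out
  -- all Sylow subgroups are normal
  have hn : ∀ (q : ℕ) (_ : Fact q.Prime) (Q : Sylow q G), (↑Q : Subgroup G).Normal := by
    have h03 := (isNilpotent_of_finite_tfae (G := G)).out 0 3
    exact h03.mp hnil
  let e := Sylow.directProductOfNormal (G := G) (fun {q} hq Q => hn q hq Q)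
  -- p is a prime factor of |G|
  have hcard : Nat.card (P : Subgroup G) = p ^ ((Nat.card G).factorization p) :=
    P.card_eq_multiplicity
  have hfac : (Nat.card G).factorization p ≠ 0 := by
    intro h0
    rw [h0, pow_zero] at hcard
    haveI : Subsingleton (P : Subgroup G) := (Nat.card_eq_one_iff_unique.mp hcard).1
    exact hnc (isCyclic_of_subsingleton)
  have hpmem : p ∈ (Nat.card G).primeFactors := by
    rw [← Nat.support_factorization]; exact Finsupp.mem_support_iff.mpr hfac
  -- the projection onto the Sylow p-subgroup
  let π : G →* (P : Subgroup G) :=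
    (Pi.evalMonoidHom (fun Q : Sylow p G => (Q : Subgroup G)) P).comp
      ((Pi.evalMonoidHom
        (fun q : (Nat.card G).primeFactors => ∀ Q : Sylow q G, (Q : Subgroup G))
        ⟨p, hpmem⟩).comp e.symm.toMonoidHom)
  have hπsurj : Function.Surjective π := by
    intro y
    refine ⟨e (Pi.mulSingle ⟨p, hpmem⟩ (Pi.mulSingle P y)), ?_⟩
    show (Pi.evalMonoidHom _ P)
      ((Pi.evalMonoidHom _ ⟨p, hpmem⟩) (e.symm (e _))) = y
    rw [MulEquiv.symm_apply_apply]
    simp [Pi.evalMonoidHom]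
  set M := Subgroup.closure (pNSet p (P : Subgroup G)) with hM
  let φ : G →* ((P : Subgroup G) ⧸ M) := (QuotientGroup.mk' M).comp π
  have hφsurj : Function.Surjective φ :=
    (QuotientGroup.mk'_surjective M).comp hπsurj
  -- generating elements lie outside the kernel
  have hSsub : {g : G | ∃ h : G, Subgroup.closure {g, h} = ⊤} ⊆ (φ.ker : Set G)ᶜ := by
    rintro g ⟨h, hgh⟩ hker
    have hg1 : φ g = 1 := MonoidHom.mem_ker.mp hker
    have htop : Subgroup.closure {φ g, φ h} = ⊤ := by
      have h1 := congrArg (Subgroup.map φ) hgh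
      rwa [MonoidHom.map_closure, Set.image_pair,
        Subgroup.map_top_of_surjective _ hφsurj] at h1
    rw [hg1] at htop
    have hcyc : IsCyclic ((P : Subgroup G) ⧸ M) := by
      have hle : Subgroup.closure ({1, φ h} : Set _) ≤ Subgroup.closure {φ h} := by
        rw [Subgroup.closure_le]
        rintro z (rfl | rfl)
        · exact one_mem _
        · exact Subgroup.subset_closure rfl
      have h2 : Subgroup.closure ({φ h} : Set _) = ⊤ := top_le_iff.mp (htop ▸ hle)
      refine ⟨φ h, fun z => ?_⟩
      have : z ∈ Subgroup.zpowers (φ h) := by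
        rw [Subgroup.zpowers_eq_closure, h2]; exact Subgroup.mem_top z
      exact this
    exact hnc (burnside_basis p P.isPGroup' hcyc)
  -- cardinalities
  have hV : Nat.card ((P : Subgroup G) ⧸ M) ≤ p * p := by
    obtain ⟨x, y, hxy⟩ := h2P
    exact card_pNQuotient_le p hp.pos hxy
  have hker_card : Nat.card G = Nat.card ((P : Subgroup G) ⧸ M) * Nat.card φ.ker := by
    rw [Subgroup.card_eq_card_quotient_mul_card_subgroup φ.ker]
    congr 1
    exact Nat.card_congr (QuotientGroup.quotientKerEquivOfSurjective φ hφsurj).toEquiv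
  have hcompl : Nat.card ↥((φ.ker : Set G)ᶜ) + Nat.card φ.ker = Nat.card G := by
    have h1 := Set.ncard_add_ncard_compl (φ.ker : Set G)
    have h2 : Nat.card φ.ker = (φ.ker : Set G).ncard := by
      rw [← Nat.card_coe_set_eq]; rfl
    rw [Nat.card_coe_set_eq, h2]
    omega
  have hS : Nat.card {g : G | ∃ h : G, Subgroup.closure {g, h} = ⊤}
      ≤ Nat.card ↥((φ.ker : Set G)ᶜ) :=
    Nat.card_mono (Set.toFinite _) hSsub
  -- arithmetic
  set a := Nat.card {g : G | ∃ h : G, Subgroup.closure {g, h} = ⊤}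
  set k := Nat.card φ.ker
  set n := Nat.card G
  have h1 : a + k ≤ n := by omega
  have h2 : n ≤ k * (p * p) := by
    rw [hker_card]
    calc Nat.card ((P : Subgroup G) ⧸ M) * k ≤ (p * p) * k :=
          Nat.mul_le_mul_right k hV
      _ = k * (p * p) := Nat.mul_comm _ _
  have hq1 : 1 ≤ p * p := Nat.one_le_iff_ne_zero.mpr (Nat.mul_ne_zero hp.pos.ne' hp.pos.ne')
  have key : a * (p * p) ≤ n * (p * p - 1) := by
    have h3 : a * (p * p) + k * (p * p) ≤ n * (p * p) :=
      (Nat.add_mul a k (p * p)) ▸ Nat.mul_le_mul_right _ h1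
    have h4 : a * (p * p) + n ≤ n * (p * p) := by omega
    have h5 : n * (p * p) = n * (p * p - 1) + n := by
      rw [← Nat.mul_succ]
      congr 1
      omega
    omega
  have hpp : p ^ 2 = p * p := by ring
  rw [hpp]
  exact key
end

section
/- Let p be a prime and G = C_p × C_p. Then the vertex connectivity of Δ(G) equals p² − p, which is the minimal degree of Δ(G). -/
open SimpleGraph

open scoped Classical in
/-- The vertex connectivity of a finite graph: the least number of vertices whose
removal disconnects the graph, with `κ(K_n) = n - 1`. -/
noncomputable def vertexConnectivity {V : Type*} [Fintype V] (Γ : SimpleGraph V) : ℕ :=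
  if Γ = ⊤ then Fintype.card V - 1
  else sInf {n | ∃ X : Set V, X.ncard = n ∧ ¬ (Γ.induce Xᶜ).Connected}


variable (p : ℕ) [Fact p.Prime]

abbrev Mp := Multiplicative (ZMod p × ZMod p)

lemma cardM : Nat.card (Mp p) = p ^ 2 := by
  simp [Nat.card_eq_fintype_card, ZMod.card, sq]

lemma powM (g : Mp p) : g ^ p = 1 := by
  have h : p • (Multiplicative.toAdd g) = 0 := by
    ext <;> simp [nsmul_eq_mul, ZMod.natCast_self]
  exact h

lemma ordM (g : Mp p) (hg : g ≠ 1) : orderOf g = p := by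
  rcases (Nat.Prime.eq_one_or_self_of_dvd Fact.out _
    (orderOf_dvd_of_pow_eq_one (powM p g))) with h1 | h1
  · exact absurd (orderOf_eq_one_iff.mp h1) hg
  · exact h1

lemma card_zpow_le (g : Mp p) : Nat.card (Subgroup.zpowers g) ≤ p := by
  rw [Nat.card_zpowers]
  exact Nat.le_of_dvd (Fact.out : p.Prime).pos (orderOf_dvd_of_pow_eq_one (powM p g))

lemma card_zpow (g : Mp p) (hg : g ≠ 1) : Nat.card (Subgroup.zpowers g) = p := by
  rw [Nat.card_zpowers, ordM p g hg]

lemma not_top_of_le_zpowers {g h k : Mp p} (hle : ({g, h} : Set (Mp p)) ⊆ Subgroup.zpowers k) :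
    Subgroup.closure {g, h} ≠ ⊤ := by
  have hp2 : 1 < p := (Fact.out : p.Prime).one_lt
  intro htop
  have hle' : Subgroup.closure {g, h} ≤ Subgroup.zpowers k := (Subgroup.closure_le _).mpr hle
  have hcard := le_trans (Subgroup.card_le_of_le hle') (card_zpow_le p k)
  rw [htop, Subgroup.card_top, cardM] at hcard
  nlinarith

lemma closure_top_iff (g h : Mp p) :
    Subgroup.closure {g, h} = ⊤ ↔ g ≠ 1 ∧ h ∉ Subgroup.zpowers g := by
  have hp2 : 1 < p := (Fact.out : p.Prime).one_lt
  constructor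
  · intro htop
    constructor
    · rintro rfl
      refine not_top_of_le_zpowers p (k := h) ?_ htop
      rintro x (rfl | rfl)
      · exact one_mem _
      · exact Subgroup.mem_zpowers _
    · intro hmem
      refine not_top_of_le_zpowers p (k := g) ?_ htop
      rintro x (rfl | rfl)
      · exact Subgroup.mem_zpowers _
      · exact hmem
  · rintro ⟨hg, hh⟩
    set H := Subgroup.closure ({g, h} : Set (Mp p)) with hH
    have hgH : g ∈ H := Subgroup.subset_closure (by simp)
    have hhH : h ∈ H := Subgroup.subset_closure (by simp)
    have hle : Subgroup.zpowers g ≤ H := Subgroup.zpowers_le.mpr hgH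
    have hpcard : Nat.card (Subgroup.zpowers g) = p := card_zpow p g hg
    have hdvd : Nat.card H ∣ p ^ 2 := cardM p ▸ Subgroup.card_subgroup_dvd_card H
    have h1 : p ≤ Nat.card H :=
      le_trans (le_of_eq hpcard.symm) (Subgroup.card_le_of_le hle)
    have h2 : Nat.card H ≠ p := by
      intro e
      have heq := Subgroup.eq_of_le_of_card_ge hle (by rw [hpcard, e])
      exact hh (heq ▸ hhH)
    rcases (Nat.dvd_prime_pow Fact.out).mp hdvd with ⟨i, hi, hcard⟩
    interval_cases i
    · rw [pow_zero] at hcard; omega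
    · rw [pow_one] at hcard; exact absurd hcard h2
    · exact Subgroup.eq_top_of_card_eq H (by rw [hcard, cardM])

lemma exists_not_mem_zpowers (g : Mp p) : ∃ h : Mp p, h ∉ Subgroup.zpowers g := by
  have hp2 : 1 < p := (Fact.out : p.Prime).one_lt
  by_contra hall
  push_neg at hall
  have htop : Subgroup.zpowers g = ⊤ := (Subgroup.eq_top_iff' _).mpr hall
  have := card_zpow_le p g
  rw [htop, Subgroup.card_top, cardM] at this
  nlinarith

lemma nonIso_eq : nonIso (Mp p) = {g : Mp p | g ≠ 1} := by
  ext g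
  constructor
  · rintro ⟨h, _, htop⟩
    exact ((closure_top_iff p g h).mp htop).1
  · intro hg
    obtain ⟨h, hh⟩ := exists_not_mem_zpowers p g
    exact ⟨h, fun e => hh (e ▸ Subgroup.mem_zpowers g),
      (closure_top_iff p g h).mpr ⟨hg, hh⟩⟩

lemma mem_nonIso {g : Mp p} (hg : g ≠ 1) : g ∈ nonIso (Mp p) := by
  rw [nonIso_eq]; exact hg

lemma ne_one_of_nonIso {g : Mp p} (hg : g ∈ nonIso (Mp p)) : g ≠ 1 := by
  rwa [nonIso_eq] at hg

lemma zpowers_eq_iff {u v : Mp p} (hu : u ≠ 1) (hv : v ≠ 1) :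
    v ∈ Subgroup.zpowers u ↔ Subgroup.zpowers v = Subgroup.zpowers u := by
  constructor
  · intro h
    exact Subgroup.eq_of_le_of_card_ge (Subgroup.zpowers_le.mpr h)
      (by rw [card_zpow p u hu, card_zpow p v hv])
  · intro h
    exact h ▸ Subgroup.mem_zpowers v

lemma delta_adj (u v : nonIso (Mp p)) :
    (deltaGraph (Mp p)).Adj u v ↔ (↑v : Mp p) ∉ Subgroup.zpowers (↑u : Mp p) := by
  constructor
  · rintro ⟨_, htop⟩
    exact ((closure_top_iff p _ _).mp htop).2
  · intro h
    have hne : (↑u : Mp p) ≠ ↑v := fun e => h (e ▸ Subgroup.mem_zpowers _)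
    exact ⟨hne,
      (closure_top_iff p _ _).mpr ⟨ne_one_of_nonIso p u.2, h⟩⟩

lemma card_nonIso : Nat.card (nonIso (Mp p)) = p ^ 2 - 1 := by
  have he : nonIso (Mp p) = ({1} : Set (Mp p))ᶜ := by
    rw [nonIso_eq]; ext g; simp
  have h := Set.ncard_add_ncard_compl ({1} : Set (Mp p)) (Set.toFinite _) (Set.toFinite _)
  rw [Set.ncard_singleton, cardM] at h
  rw [Nat.card_coe_set_eq, he]
  omega

lemma ncard_compl_zpowers (u : Mp p) (hu : u ≠ 1) :
    {x : Mp p | x ∉ Subgroup.zpowers u}.ncard = p ^ 2 - p := by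
  have he : {x : Mp p | x ∉ Subgroup.zpowers u} = ((Subgroup.zpowers u : Set (Mp p)))ᶜ := rfl
  have h := Set.ncard_add_ncard_compl ((Subgroup.zpowers u : Set (Mp p)))
    (Set.toFinite _) (Set.toFinite _)
  have hc : ((Subgroup.zpowers u : Set (Mp p))).ncard = p := by
    rw [← Nat.card_coe_set_eq]
    exact card_zpow p u hu
  rw [hc, cardM] at h
  rw [he]
  omega

lemma card_neighborSet (u : nonIso (Mp p)) :
    Nat.card ((deltaGraph (Mp p)).neighborSet u) = p ^ 2 - p := by
  have hu : (↑u : Mp p) ≠ 1 := ne_one_of_nonIso p u.2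
  have e : ((deltaGraph (Mp p)).neighborSet u) ≃
      {x : Mp p // x ∉ Subgroup.zpowers (↑u : Mp p)} :=
    ⟨fun v => ⟨↑↑v, (delta_adj p u ↑v).mp v.2⟩,
     fun x => ⟨⟨x.1, mem_nonIso p (fun e => x.2 (e ▸ one_mem _))⟩,
      (delta_adj p u _).mpr x.2⟩, fun v => rfl, fun x => rfl⟩
  rw [Nat.card_congr e]
  exact (Nat.card_coe_set_eq {x : Mp p | x ∉ Subgroup.zpowers (↑u : Mp p)}).trans
    (ncard_compl_zpowers p (↑u) hu)

lemma g0_ne_one : (Multiplicative.ofAdd ((1 : ZMod p), (0 : ZMod p))) ≠ 1 := by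
  intro h
  rw [← ofAdd_zero] at h
  have h2 : ((1 : ZMod p), (0 : ZMod p)) = 0 := Multiplicative.ofAdd.injective h
  rw [Prod.mk.injEq] at h2
  exact one_ne_zero h2.1

open scoped Classical in
lemma delta_degree (u : nonIso (Mp p)) : (deltaGraph (Mp p)).degree u = p ^ 2 - p := by
  rw [← SimpleGraph.card_neighborSet_eq_degree, ← Nat.card_eq_fintype_card]
  exact card_neighborSet p u

lemma nonempty_nonIso : Nonempty (nonIso (Mp p)) :=
  ⟨⟨_, mem_nonIso p (g0_ne_one p)⟩⟩

open scoped Classical in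
lemma delta_minDegree : (deltaGraph (Mp p)).minDegree = p ^ 2 - p := by
  have hne : Nonempty (nonIso (Mp p)) := nonempty_nonIso p
  apply le_antisymm
  · calc (deltaGraph (Mp p)).minDegree ≤ (deltaGraph (Mp p)).degree (Classical.choice hne) :=
          SimpleGraph.minDegree_le_degree _ _
      _ = p ^ 2 - p := delta_degree p _
  · exact SimpleGraph.le_minDegree_of_forall_le_degree _ _ (fun v => (delta_degree p v).ge)

lemma three_le_of_same (u v : Mp p) (hu : u ≠ 1) (hv : v ≠ 1) (huv : u ≠ v)
    (hmem : v ∈ Subgroup.zpowers u) : 3 ≤ p := by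
  have hsub : ({1, u, v} : Set (Mp p)) ⊆ (Subgroup.zpowers u : Set (Mp p)) := by
    rintro x (rfl | rfl | rfl)
    · exact one_mem _
    · exact Subgroup.mem_zpowers _
    · exact hmem
  have h3 : ({1, u, v} : Set (Mp p)).ncard = 3 := by
    rw [Set.ncard_insert_of_notMem (by simp [hu.symm, hv.symm]) (Set.toFinite _),
      Set.ncard_pair huv]
  have hle := Set.ncard_le_ncard hsub (Set.toFinite _)
  rw [h3, ← Nat.card_coe_set_eq] at hle
  calc 3 ≤ Nat.card (Subgroup.zpowers u) := hle
    _ = p := card_zpow p u hu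

lemma delta_top_of_two (h2 : p = 2) : deltaGraph (Mp p) = ⊤ := by
  ext u v
  rw [SimpleGraph.top_adj]
  constructor
  · rintro ⟨hne, _⟩
    exact fun e => hne (e ▸ rfl)
  · intro hne
    rw [delta_adj]
    intro hmem
    have := three_le_of_same p _ _ (ne_one_of_nonIso p u.2) (ne_one_of_nonIso p v.2)
      (fun e => hne (Subtype.ext e)) hmem
    omega

-- the fixed base vertex
noncomputable def u₀ : nonIso (Mp p) := ⟨Multiplicative.ofAdd ((1 : ZMod p), (0 : ZMod p)),
  mem_nonIso p (g0_ne_one p)⟩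

lemma v₁_props (hp : p ≠ 2) :
    ∃ v : nonIso (Mp p), v ≠ u₀ p ∧ (↑v : Mp p) ∈ Subgroup.zpowers (↑(u₀ p) : Mp p) := by
  have hp3 : 3 ≤ p := by
    have := (Fact.out : p.Prime).two_le
    omega
  set g : Mp p := (↑(u₀ p) : Mp p) with hg
  have hgne : g ≠ 1 := g0_ne_one p
  have hord : orderOf g = p := ordM p g hgne
  have hg2 : g ^ 2 ≠ 1 := by
    intro h
    have hdvd := orderOf_dvd_of_pow_eq_one h
    rw [hord] at hdvd
    exact absurd (Nat.le_of_dvd two_pos hdvd) (by omega)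
  have hg2g : g ^ 2 ≠ g := by
    intro h
    rw [pow_two] at h
    exact hgne (mul_eq_left.mp h)
  refine ⟨⟨g ^ 2, mem_nonIso p hg2⟩, ?_, ?_⟩
  · intro e
    exact hg2g (congrArg Subtype.val e)
  · exact pow_mem (Subgroup.mem_zpowers g) 2

open scoped Classical in
lemma not_connected_compl_nbhd (hp : p ≠ 2) :
    ¬ ((deltaGraph (Mp p)).induce ((deltaGraph (Mp p)).neighborSet (u₀ p))ᶜ).Connected := by
  obtain ⟨v, hvne, hvmem⟩ := v₁_props p hp
  set Γ := deltaGraph (Mp p) with hΓ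
  set X := Γ.neighborSet (u₀ p) with hX
  have hu0X : u₀ p ∈ Xᶜ := fun h => Γ.irrefl h
  have hvX : v ∈ Xᶜ := fun h => ((delta_adj p _ _).mp h) hvmem
  intro hconn
  have hreach := hconn.preconnected ⟨u₀ p, hu0X⟩ ⟨v, hvX⟩
  have hbot : (Γ.induce Xᶜ) ≤ ⊥ := by
    intro a b hab
    have hadj : Γ.Adj ↑a ↑b := hab
    have ha : (↑↑a : Mp p) ∈ Subgroup.zpowers (↑(u₀ p) : Mp p) := by
      by_contra h
      exact a.2 ((delta_adj p _ _).mpr h)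
    have hb : (↑↑b : Mp p) ∈ Subgroup.zpowers (↑(u₀ p) : Mp p) := by
      by_contra h
      exact b.2 ((delta_adj p _ _).mpr h)
    have hane : (↑↑a : Mp p) ≠ 1 := ne_one_of_nonIso p (↑a : nonIso (Mp p)).2
    have hz : Subgroup.zpowers (↑↑a : Mp p) = Subgroup.zpowers (↑(u₀ p) : Mp p) :=
      (zpowers_eq_iff p (g0_ne_one p) hane).mp ha
    exact ((delta_adj p (↑a) (↑b)).mp hadj) (hz ▸ hb)
  have heq := SimpleGraph.reachable_bot.mp (hreach.mono hbot)
  exact hvne (congrArg Subtype.val heq).symm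

open scoped Classical in
lemma connected_of_small (X : Set (nonIso (Mp p))) (hX : X.ncard < p ^ 2 - p) :
    ((deltaGraph (Mp p)).induce Xᶜ).Connected := by
  have hp2 : 2 ≤ p := (Fact.out : p.Prime).two_le
  have hpsq : p ≤ p ^ 2 := Nat.le_self_pow two_ne_zero p
  set Γ := deltaGraph (Mp p) with hΓ
  have key : ∀ a : nonIso (Mp p), ∃ w : nonIso (Mp p), w ∈ Xᶜ ∧ Γ.Adj a w := by
    intro a
    by_contra hcon
    push_neg at hcon
    have hsub : Γ.neighborSet a ⊆ X := by
      intro w hw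
      by_contra hwX
      exact (hcon w hwX) hw
    have hle := Set.ncard_le_ncard hsub (Set.toFinite _)
    rw [← Nat.card_coe_set_eq (Γ.neighborSet a), card_neighborSet p a] at hle
    omega
  have hnonempty : (Xᶜ : Set (nonIso (Mp p))).Nonempty := by
    rw [Set.nonempty_compl]
    intro huniv
    rw [huniv, Set.ncard_univ, card_nonIso] at hX
    omega
  rw [SimpleGraph.connected_iff]
  refine ⟨?_, Set.nonempty_coe_sort.mpr hnonempty⟩
  · intro a b
    by_cases hab : a = b
    · exact hab ▸ SimpleGraph.Reachable.refl _
    by_cases hadj : Γ.Adj ↑a ↑b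
    · exact SimpleGraph.Adj.reachable hadj
    · obtain ⟨w, hwX, hw⟩ := key ↑a
      have hbmem : (↑↑b : Mp p) ∈ Subgroup.zpowers (↑↑a : Mp p) := by
        by_contra h
        exact hadj ((delta_adj p _ _).mpr h)
      have hane : (↑↑a : Mp p) ≠ 1 := ne_one_of_nonIso p (↑a : nonIso (Mp p)).2
      have hbne : (↑↑b : Mp p) ≠ 1 := ne_one_of_nonIso p (↑b : nonIso (Mp p)).2
      have hz : Subgroup.zpowers (↑↑b : Mp p) = Subgroup.zpowers (↑↑a : Mp p) :=
        (zpowers_eq_iff p hane hbne).mp hbmem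
      have hwnb : Γ.Adj ↑b w := by
        rw [delta_adj]
        intro h
        exact ((delta_adj p (↑a) w).mp hw) (hz ▸ h)
      have h1 : (Γ.induce Xᶜ).Adj a ⟨w, hwX⟩ := hw
      have h2 : (Γ.induce Xᶜ).Adj ⟨w, hwX⟩ b := hwnb.symm
      exact (SimpleGraph.Adj.reachable h1).trans (SimpleGraph.Adj.reachable h2)

open scoped Classical in
theorem stmt_9 (p : ℕ) [Fact p.Prime] :
    vertexConnectivity (deltaGraph (Multiplicative (ZMod p × ZMod p))) = p ^ 2 - p ∧
    (deltaGraph (Multiplicative (ZMod p × ZMod p))).minDegree = p ^ 2 - p := by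
  refine ⟨?_, delta_minDegree p⟩
  by_cases hp : p = 2
  · subst hp
    unfold vertexConnectivity
    rw [if_pos (delta_top_of_two 2 rfl)]
    have hc : Fintype.card (nonIso (Mp 2)) = 3 := by
      rw [← Nat.card_eq_fintype_card, card_nonIso]; norm_num
    rw [hc]; norm_num
  · have hne : deltaGraph (Mp p) ≠ ⊤ := by
      intro htop
      obtain ⟨v, hvne, hvmem⟩ := v₁_props p hp
      have hadj : (deltaGraph (Mp p)).Adj (u₀ p) v := by
        rw [htop]
        exact fun e => hvne e.symm
      exact ((delta_adj p _ _).mp hadj) hvmem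
    unfold vertexConnectivity
    rw [if_neg hne]
    have hmem : p ^ 2 - p ∈ {n | ∃ X : Set (nonIso (Mp p)), X.ncard = n ∧
        ¬ ((deltaGraph (Mp p)).induce Xᶜ).Connected} :=
      ⟨(deltaGraph (Mp p)).neighborSet (u₀ p),
        by rw [← Nat.card_coe_set_eq, card_neighborSet],
        not_connected_compl_nbhd p hp⟩
    apply le_antisymm
    · exact Nat.sInf_le hmem
    · apply le_csInf ⟨_, hmem⟩
      rintro n ⟨X, rfl, hnc⟩
      by_contra h
      push_neg at h
      exact hnc (connected_of_small p X h)
end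

section
/- Let G be a finite 2-generated nilpotent group that is not a cyclic group of even order, and assume G is nontrivial. Then every non-isolated vertex of the generating graph Γ(G) has even degree. -/
open SimpleGraph

section AuxLemmas

open Subgroup

/-- A finset admitting a fixed-point-free involution has even cardinality. -/
lemma even_card_of_fpf {α : Type*} [DecidableEq α] (s : Finset α) (f : α → α)
    (hmem : ∀ a ∈ s, f a ∈ s) (hinv : ∀ a ∈ s, f (f a) = a)
    (hne : ∀ a ∈ s, f a ≠ a) : Even s.card := by
  generalize hn : s.card = n
  induction n using Nat.strong_induction_on generalizing s with
  | _ n ih =>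
    rcases s.eq_empty_or_nonempty with rfl | ⟨a, ha⟩
    · rw [Finset.card_empty] at hn; exact hn ▸ Even.zero
    · have hfa : f a ∈ s := hmem a ha
      have hfa' : f a ≠ a := hne a ha
      set s' := (s.erase a).erase (f a) with hs'
      have hub : ∀ b ∈ s', b ∈ s := fun b hb =>
        Finset.mem_of_mem_erase (Finset.mem_of_mem_erase hb)
      have hmem' : ∀ b ∈ s', f b ∈ s' := by
        intro b hb
        have hbs := hub b hb
        have hbfa : b ≠ f a := Finset.ne_of_mem_erase hb
        have hba : b ≠ a := Finset.ne_of_mem_erase (Finset.mem_of_mem_erase hb)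
        refine Finset.mem_erase.mpr ⟨?_, Finset.mem_erase.mpr ⟨?_, hmem b hbs⟩⟩
        · intro h
          exact hba (by rw [← hinv b hbs, h, hinv a ha])
        · intro h
          exact hbfa (by rw [← hinv b hbs, h])
      have hfa2 : f a ∈ s.erase a := Finset.mem_erase.mpr ⟨hfa', hfa⟩
      have hcard : s'.card = n - 2 := by
        rw [hs', Finset.card_erase_of_mem hfa2, Finset.card_erase_of_mem ha, hn]; omega
      have h2 : 2 ≤ n := by
        have : 1 ≤ (s.erase a).card := Finset.card_pos.mpr ⟨f a, hfa2⟩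
        rw [Finset.card_erase_of_mem ha, hn] at this
        omega
      have hev : Even (n - 2) :=
        ih (n - 2) (by omega) s' hmem' (fun b hb => hinv b (hub b hb))
          (fun b hb => hne b (hub b hb)) hcard
      obtain ⟨k, hk⟩ := hev
      exact ⟨k + 1, by omega⟩

lemma closure_pair_eq_of_mem {G : Type*} [Group G] {g t u : G}
    (hu : u ∈ closure ({g, t} : Set G)) (ht : t ∈ closure ({g, u} : Set G)) :
    closure ({g, u} : Set G) = closure ({g, t} : Set G) := by
  refine le_antisymm ((closure_le _).mpr ?_) ((closure_le _).mpr ?_)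
  · rw [Set.insert_subset_iff, Set.singleton_subset_iff]
    exact ⟨subset_closure (Set.mem_insert g _), hu⟩
  · rw [Set.insert_subset_iff, Set.singleton_subset_iff]
    exact ⟨subset_closure (Set.mem_insert g _), ht⟩

/-- In a finite nilpotent group, elements of coprime prime-power orders commute. -/
lemma commute_of_prime_pow_orders {G : Type*} [Group G] [Finite G]
    (hnil : Group.IsNilpotent G) {p q : ℕ} (hp : p.Prime) (hq : q.Prime) (hne : p ≠ q)
    {a b : ℕ} {x y : G} (hx : orderOf x ∣ p ^ a) (hy : orderOf y ∣ q ^ b) : Commute x y := by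
  haveI := Fact.mk hp; haveI := Fact.mk hq
  have hnormal := ((isNilpotent_of_finite_tfae (G := G)).out 0 3).mp hnil
  have hxP : IsPGroup p (zpowers x) := by
    obtain ⟨i, -, hi⟩ := (Nat.dvd_prime_pow hp).mp hx
    exact IsPGroup.of_card (by rw [Nat.card_zpowers, hi])
  have hyQ : IsPGroup q (zpowers y) := by
    obtain ⟨i, -, hi⟩ := (Nat.dvd_prime_pow hq).mp hy
    exact IsPGroup.of_card (by rw [Nat.card_zpowers, hi])
  obtain ⟨P, hPle⟩ := hxP.exists_le_sylow
  obtain ⟨Q, hQle⟩ := hyQ.exists_le_sylow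
  exact Subgroup.commute_of_normal_of_disjoint P Q (hnormal p ⟨hp⟩ P) (hnormal q ⟨hq⟩ Q)
    (IsPGroup.disjoint_of_ne p q hne _ _ P.isPGroup' Q.isPGroup')
    x y (hPle (mem_zpowers x)) (hQle (mem_zpowers y))

/-- In a finite nilpotent group, an element of odd order commutes with any element
whose square is trivial. -/
lemma commute_of_odd_of_sq {G : Type*} [Group G] [Fintype G]
    (hnil : Group.IsNilpotent G) {t : G} (ht : t * t = 1) :
    ∀ (n : ℕ) (x : G), orderOf x = n → Odd n → Commute x t := by
  have ht2 : orderOf t ∣ 2 ^ 1 := by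
    simpa using orderOf_dvd_of_pow_eq_one (show t ^ 2 = 1 by rwa [pow_two])
  intro n
  induction n using Nat.strong_induction_on with
  | _ n ih =>
    intro x hx hodd
    rcases eq_or_ne n 1 with rfl | h1
    · rw [orderOf_eq_one_iff.mp hx]; exact Commute.one_left t
    have hn0 : 0 < n := hx ▸ orderOf_pos x
    set q := n.minFac with hqdef
    have hqp : q.Prime := Nat.minFac_prime h1
    have hqdvd : q ∣ n := n.minFac_dvd
    have hq2 : q ≠ 2 := by
      intro h
      obtain ⟨c, hc⟩ : 2 ∣ n := h ▸ hqdvd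
      have := Nat.odd_iff.mp hodd
      omega
    set k := n.factorization q with hkdef
    set m := ordCompl[q] n with hmdef
    have hnm : q ^ k * m = n := Nat.ordProj_mul_ordCompl_eq_self n q
    have hm0 : 0 < m := Nat.ordCompl_pos q hn0.ne'
    have hco : Nat.Coprime (q ^ k) m :=
      Nat.Coprime.pow_left k (Nat.coprime_ordCompl hqp hn0.ne')
    have hyord : orderOf (x ^ m) ∣ q ^ k := by
      apply orderOf_dvd_of_pow_eq_one
      rw [← pow_mul, mul_comm, hnm, ← hx]
      exact pow_orderOf_eq_one x
    have hyt : Commute (x ^ m) t :=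
      commute_of_prime_pow_orders hnil hqp Nat.prime_two hq2 hyord ht2
    have hzord : orderOf (x ^ q ^ k) ∣ m := by
      apply orderOf_dvd_of_pow_eq_one
      rw [← pow_mul, hnm, ← hx]
      exact pow_orderOf_eq_one x
    have hk1 : 1 < q ^ k := by
      have hkpos : 0 < k := hqp.factorization_pos_of_dvd hn0.ne' hqdvd
      exact Nat.one_lt_pow hkpos.ne' hqp.one_lt
    have hmn : m < n := by
      calc m < q ^ k * m := by nlinarith
        _ = n := hnm
    have hzlt : orderOf (x ^ q ^ k) < n := lt_of_le_of_lt (Nat.le_of_dvd hm0 hzord) hmn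
    have hzodd : Odd (orderOf (x ^ q ^ k)) := by
      have hdvd : orderOf (x ^ q ^ k) ∣ n := hzord.trans (Nat.ordCompl_dvd n q)
      rcases Nat.even_or_odd (orderOf (x ^ q ^ k)) with he | ho
      · exfalso
        obtain ⟨c, hc⟩ : 2 ∣ n := dvd_trans he.two_dvd hdvd
        have := Nat.odd_iff.mp hodd
        omega
      · exact ho
    have hzt : Commute (x ^ q ^ k) t := ih _ hzlt _ rfl hzodd
    set A := Nat.gcdA (q ^ k) m with hA
    set B := Nat.gcdB (q ^ k) m with hB
    have hbez : ((q ^ k : ℕ) : ℤ) * A + (m : ℤ) * B = 1 := by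
      have h := Nat.gcd_eq_gcd_ab (q ^ k) m
      rw [Nat.Coprime] at hco
      rw [hco] at h
      exact_mod_cast h.symm
    have hxeq : x = (x ^ q ^ k) ^ A * (x ^ m) ^ B := by
      calc x = x ^ (1 : ℤ) := (zpow_one x).symm
        _ = x ^ (((q ^ k : ℕ) : ℤ) * A + (m : ℤ) * B) := by rw [hbez]
        _ = x ^ (((q ^ k : ℕ) : ℤ) * A) * x ^ ((m : ℤ) * B) := zpow_add x _ _
        _ = (x ^ ((q ^ k : ℕ) : ℤ)) ^ A * (x ^ ((m : ℕ) : ℤ)) ^ B := by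
            rw [zpow_mul, zpow_mul]
        _ = (x ^ q ^ k) ^ A * (x ^ m) ^ B := by rw [zpow_natCast, zpow_natCast]
    rw [hxeq]
    exact Commute.mul_left (hzt.zpow_left A) (hyt.zpow_left B)

lemma zmem_pair {G : Type*} [Group G] {g : G} (n : ℕ) (t : G) :
    g ^ n ∈ closure ({g, t} : Set G) :=
  pow_mem (subset_closure (Set.mem_insert g _)) n

lemma tmem_pair {G : Type*} [Group G] (g t : G) : t ∈ closure ({g, t} : Set G) :=
  subset_closure (Set.mem_insert_iff.mpr (Or.inr rfl))

end AuxLemmas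

open Subgroup in
open scoped Classical in
theorem stmt_11 (G : Type*) [Group G] [Fintype G] [Nontrivial G]
    (hnil : Group.IsNilpotent G) (h2 : TwoGenerated G)
    (hnot : ¬ (IsCyclic G ∧ Even (Fintype.card G)))
    (g : G) (hg : g ∈ nonIso G) :
    Even ((genGraph G).degree g) := by
  classical
  have hdeg : (genGraph G).degree g
      = (Finset.univ.filter fun h => (genGraph G).Adj g h).card := by
    show ((genGraph G).neighborFinset g).card = _
    congr 1
    ext h
    simp [SimpleGraph.mem_neighborFinset]
  rw [hdeg]
  by_cases hc : closure ({g} : Set G) = ⊤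
  · -- G is cyclic generated by g; the card of G is odd
    have hcyc : IsCyclic G := by
      refine ⟨⟨g, fun x => ?_⟩⟩
      have hx : x ∈ closure ({g} : Set G) := hc.symm ▸ Subgroup.mem_top x
      obtain ⟨n, hn⟩ := Subgroup.mem_closure_singleton.mp hx
      exact ⟨n, hn⟩
    have hodd : Odd (Fintype.card G) :=
      Nat.not_even_iff_odd.mp fun he => hnot ⟨hcyc, he⟩
    have hfil : (Finset.univ.filter fun h => (genGraph G).Adj g h)
        = Finset.univ.filter fun h => h ≠ g := by
      ext h
      simp only [Finset.mem_filter, Finset.mem_univ, true_and]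
      constructor
      · exact fun hh => hh.1.symm
      · intro hne
        refine ⟨hne.symm, eq_top_iff.mpr ?_⟩
        rw [← hc]
        exact closure_mono (Set.singleton_subset_iff.mpr (Set.mem_insert g _))
    rw [hfil, Finset.filter_ne', Finset.card_erase_of_mem (Finset.mem_univ g),
      Finset.card_univ]
    obtain ⟨k, hk⟩ := hodd
    exact ⟨k, by omega⟩
  · -- g does not generate G
    have hfil : (Finset.univ.filter fun h => (genGraph G).Adj g h)
        = Finset.univ.filter fun h => closure ({g, h} : Set G) = ⊤ := by
      ext h
      simp only [Finset.mem_filter, Finset.mem_univ, true_and]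
      constructor
      · exact fun hh => hh.2
      · intro hh
        refine ⟨?_, hh⟩
        rintro rfl
        exact hc (by rwa [Set.pair_eq_singleton] at hh)
    rw [hfil]
    set A := Finset.univ.filter fun h => closure ({g, h} : Set G) = ⊤ with hA
    have hmemA : ∀ h, h ∈ A ↔ closure ({g, h} : Set G) = ⊤ := by
      intro h; simp [hA]
    set T := A.filter fun t => t * t = 1 with hT
    set T' := A.filter fun t => ¬ t * t = 1 with hT'
    have hsplit : A.card = T.card + T'.card :=
      (Finset.card_filter_add_card_filter_not (fun t => t * t = 1)).symm
    have hmemT : ∀ t, t ∈ T ↔ closure ({g, t} : Set G) = ⊤ ∧ t * t = 1 := by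
      intro t; simp [hT, hmemA]
    have hmemT' : ∀ t, t ∈ T' ↔ closure ({g, t} : Set G) = ⊤ ∧ ¬ t * t = 1 := by
      intro t; simp [hT', hmemA]
    have hevenT' : Even T'.card := by
      apply even_card_of_fpf T' (fun t => t⁻¹)
      · intro t ht
        obtain ⟨hclo, htt⟩ := (hmemT' t).mp ht
        refine (hmemT' t⁻¹).mpr ⟨?_, ?_⟩
        · rw [closure_pair_eq_of_mem (inv_mem (tmem_pair g t))
            (by simpa using inv_mem (tmem_pair g t⁻¹))]
          exact hclo
        · intro h
          apply htt
          have := congrArg (·⁻¹) h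
          simpa [mul_inv_rev] using this
      · intro t _; exact inv_inv t
      · intro t ht
        obtain ⟨-, htt⟩ := (hmemT' t).mp ht
        intro h
        apply htt
        calc t * t = t * t⁻¹ := by rw [h]
          _ = 1 := mul_inv_cancel t
    have hevenT : Even T.card := by
      rcases Nat.even_or_odd (orderOf g) with hgE | hgO
      · -- order of g is even: pair t with z*t (resp. z*t*z), z the involution in ⟨g⟩
        set z := g ^ (orderOf g / 2) with hz
        have hgpos : 0 < orderOf g := orderOf_pos g
        have hz2 : z * z = 1 := by
          have hn : orderOf g / 2 + orderOf g / 2 = orderOf g := by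
            have := Nat.even_iff.mp hgE
            omega
          calc z * z = g ^ (orderOf g / 2 + orderOf g / 2) := (pow_add g _ _).symm
            _ = g ^ orderOf g := by rw [hn]
            _ = 1 := pow_orderOf_eq_one g
        have hzne : z ≠ 1 := by
          intro h
          have hdvd : orderOf g ∣ orderOf g / 2 := orderOf_dvd_of_pow_eq_one h
          have h2 : orderOf g / 2 < orderOf g := Nat.div_lt_self hgpos (by omega)
          have h3 : 0 < orderOf g / 2 := by
            have := Nat.even_iff.mp hgE
            omega
          exact absurd (Nat.le_of_dvd h3 hdvd) (by omega)
        have hzinv : z⁻¹ = z := inv_eq_of_mul_eq_one_right hz2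
        have hzmem : ∀ t, z ∈ closure ({g, t} : Set G) := fun t => zmem_pair _ t
        apply even_card_of_fpf T (fun t => if z * t = t * z then z * t else z * t * z)
        · intro t ht
          obtain ⟨hclo, htt⟩ := (hmemT t).mp ht
          by_cases hcm : z * t = t * z
          · rw [if_pos hcm]
            refine (hmemT _).mpr ⟨?_, ?_⟩
            · rw [closure_pair_eq_of_mem (mul_mem (hzmem t) (tmem_pair g t))
                (show t ∈ closure ({g, z * t} : Set G) from by
                  have hm := mul_mem (inv_mem (hzmem (z * t))) (tmem_pair g (z * t))
                  rwa [show z⁻¹ * (z * t) = t by group] at hm)]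
              exact hclo
            · rw [show z * t * (z * t) = z * (t * z) * t by group, ← hcm,
                show z * (z * t) * t = z * z * (t * t) by group, hz2, htt, one_mul]
          · rw [if_neg hcm]
            refine (hmemT _).mpr ⟨?_, ?_⟩
            · rw [closure_pair_eq_of_mem
                (mul_mem (mul_mem (hzmem t) (tmem_pair g t)) (hzmem t))
                (show t ∈ closure ({g, z * t * z} : Set G) from by
                  have hm := mul_mem (mul_mem (inv_mem (hzmem (z * t * z)))
                    (tmem_pair g (z * t * z))) (inv_mem (hzmem (z * t * z)))
                  rwa [show z⁻¹ * (z * t * z) * z⁻¹ = t by group] at hm)]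
              exact hclo
            · calc z * t * z * (z * t * z) = z * t * (z * z) * t * z := by group
                _ = z * t * t * z := by rw [hz2, mul_one]
                _ = z * (t * t) * z := by rw [mul_assoc z t t]
                _ = z * z := by rw [htt, mul_one]
                _ = 1 := hz2
        · intro t ht
          by_cases hcm : z * t = t * z
          · rw [if_pos hcm, if_pos (by simp only [mul_assoc, ← hcm]),
              ← mul_assoc, hz2, one_mul]
          · rw [if_neg hcm]
            have e1 : z * (z * t * z) = t * z := by
              rw [show z * (z * t * z) = z * z * (t * z) by group, hz2, one_mul]
            have e2 : z * t * z * z = z * t := by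
              rw [show z * t * z * z = z * t * (z * z) by group, hz2, mul_one]
            rw [if_neg (by
              intro h
              exact hcm (by rw [← e2, ← h]; exact e1))]
            rw [show z * (z * t * z) * z = z * z * t * (z * z) by group, hz2,
              one_mul, mul_one]
        · intro t ht
          by_cases hcm : z * t = t * z
          · rw [if_pos hcm]
            intro h
            exact hzne (mul_right_cancel (h.trans (one_mul t).symm))
          · rw [if_neg hcm]
            intro h
            apply hcm
            calc z * t = z * t * z * z⁻¹ := by group
              _ = t * z⁻¹ := by rw [h]
              _ = t * z := by rw [hzinv]
      · -- order of g is odd: T must be empty, else G is cyclic of even order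
        have hTempty : T = ∅ := by
          rw [Finset.eq_empty_iff_forall_notMem]
          intro t ht
          obtain ⟨hclo, htt⟩ := (hmemT t).mp ht
          have ht1 : t ≠ 1 := by
            rintro rfl
            apply hc
            rw [eq_top_iff, ← hclo]
            apply (closure_le _).mpr
            rw [Set.insert_subset_iff, Set.singleton_subset_iff]
            exact ⟨subset_closure (Set.mem_singleton g), one_mem _⟩
          have hcomm : Commute g t := commute_of_odd_of_sq hnil htt _ g rfl hgO
          have htz : t⁻¹ = t := inv_eq_of_mul_eq_one_right htt
          have hcyc : IsCyclic G := by
            refine ⟨⟨g * t, fun x => ?_⟩⟩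
            have hle : closure ({g, t} : Set G) ≤ zpowers (g * t) := by
              apply (closure_le _).mpr
              rw [Set.insert_subset_iff, Set.singleton_subset_iff]
              have htmem : t ∈ zpowers (g * t) := by
                have hpow : (g * t) ^ orderOf g = t := by
                  obtain ⟨c, hcc⟩ := hgO
                  rw [hcomm.mul_pow, pow_orderOf_eq_one, one_mul, hcc,
                    pow_succ, pow_mul, pow_two, htt, one_pow, one_mul]
                have hm := (zpowers (g * t)).pow_mem (mem_zpowers (g * t)) (orderOf g)
                rwa [hpow] at hm
              refine ⟨?_, htmem⟩
              have hm := mul_mem (mem_zpowers (g * t)) htmem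
              rwa [show g * t * t = g by rw [mul_assoc, htt, mul_one]] at hm
            have hx : x ∈ closure ({g, t} : Set G) := hclo.symm ▸ Subgroup.mem_top x
            exact hle hx
          have hord : orderOf t = 2 :=
            orderOf_eq_prime (by rwa [pow_two]) ht1
          have heven : Even (Fintype.card G) := by
            obtain ⟨c, hcc⟩ := hord ▸ orderOf_dvd_card (x := t)
            exact ⟨c, by omega⟩
          exact hnot ⟨hcyc, heven⟩
        rw [hTempty]
        simp
    rw [hsplit]
    exact hevenT.add hevenT'
end

section
/- For graphs Γ and Δ, the total domination number satisfies γ_t(Γ × Δ) ≤ γ_t(Γ)·γ_t(Δ), where × denotes the direct (tensor) product of graphs. -/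
open SimpleGraph

/-- A total dominating set: every vertex is adjacent to some member of `S`. -/
def IsTotalDominatingSet {V : Type*} (Γ : SimpleGraph V) (S : Set V) : Prop :=
  ∀ v, ∃ s ∈ S, Γ.Adj v s

/-- The total domination number: least size of a total dominating set. -/
noncomputable def totalDominationNumber {V : Type*} (Γ : SimpleGraph V) : ℕ :=
  sInf {n | ∃ S : Set V, S.ncard = n ∧ IsTotalDominatingSet Γ S}

/-- The direct (tensor) product of two simple graphs. -/
def tensorProd {α β : Type*} (Γ : SimpleGraph α) (Δ : SimpleGraph β) :
    SimpleGraph (α × β) where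
  Adj x y := Γ.Adj x.1 y.1 ∧ Δ.Adj x.2 y.2
  symm := ⟨fun x y ⟨h1, h2⟩ => ⟨h1.symm, h2.symm⟩⟩
  loopless := ⟨fun x h => Γ.loopless.irrefl x.1 h.1⟩

theorem stmt_14 {α β : Type*} [Fintype α] [Fintype β]
    (Γ : SimpleGraph α) (Δ : SimpleGraph β)
    (hΓ : ∃ S : Set α, IsTotalDominatingSet Γ S)
    (hΔ : ∃ S : Set β, IsTotalDominatingSet Δ S) :
    totalDominationNumber (tensorProd Γ Δ)
      ≤ totalDominationNumber Γ * totalDominationNumber Δ := by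

  obtain ⟨S, hS⟩ := hΓ
  obtain ⟨T, hT⟩ := hΔ
  have hne1 : {n | ∃ S : Set α, S.ncard = n ∧ IsTotalDominatingSet Γ S}.Nonempty :=
    ⟨S.ncard, S, rfl, hS⟩
  have hne2 : {n | ∃ S : Set β, S.ncard = n ∧ IsTotalDominatingSet Δ S}.Nonempty :=
    ⟨T.ncard, T, rfl, hT⟩
  obtain ⟨S₀, hS₀card, hS₀⟩ := Nat.sInf_mem hne1
  obtain ⟨T₀, hT₀card, hT₀⟩ := Nat.sInf_mem hne2
  apply Nat.sInf_le
  refine ⟨S₀ ×ˢ T₀, ?_, ?_⟩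
  · have : (S₀ ×ˢ T₀).ncard = S₀.ncard * T₀.ncard := by
      rw [← Nat.card_coe_set_eq, Nat.card_congr (Equiv.Set.prod S₀ T₀),
        Nat.card_prod, Nat.card_coe_set_eq, Nat.card_coe_set_eq]
    rw [this, hS₀card, hT₀card]; rfl
  · rintro ⟨v, w⟩
    obtain ⟨s, hs, hvs⟩ := hS₀ v
    obtain ⟨t, ht, hwt⟩ := hT₀ w
    exact ⟨(s, t), ⟨hs, ht⟩, hvs, hwt⟩
end

section
/- Let Γ = K_{a₁} × ⋯ × K_{a_s} be a direct (tensor) product of complete graphs with 2 ≤ a₁ ≤ ⋯ ≤ a_s and a₁ > s. Then γ_t(Γ) = s + 1, with the set {(k,k,...,k) : 1 ≤ k ≤ s+1} being a total dominating set. -/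
open SimpleGraph

/-- The direct (tensor) product `K_{a 0} × ⋯ × K_{a (s-1)}` of complete graphs:
tuples are adjacent iff they differ in every coordinate. -/
def prodCompleteGraph {s : ℕ} (a : Fin s → ℕ) :
    SimpleGraph ((i : Fin s) → Fin (a i)) where
  Adj x y := x ≠ y ∧ ∀ i, x i ≠ y i
  symm := ⟨fun x y ⟨h, h'⟩ => ⟨h.symm, fun i => (h' i).symm⟩⟩
  loopless := ⟨fun x h => h.1 rfl⟩

theorem stmt_16 (s : ℕ) (a : Fin s → ℕ) (hmono : Monotone a) (h2 : ∀ i, 2 ≤ a i)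
    (hs : 0 < s) (ha : s < a ⟨0, hs⟩) :
    IsTotalDominatingSet (prodCompleteGraph a)
      {x | ∃ k : Fin (s + 1), ∀ i, (x i : ℕ) = (k : ℕ)} ∧
    totalDominationNumber (prodCompleteGraph a) = s + 1 := by
  classical
  have hpos : ∀ i, 0 < a i := fun i => lt_of_lt_of_le two_pos (h2 i)
  have hlt : ∀ (k : Fin (s+1)) (i : Fin s), (k : ℕ) < a i := by
    intro k i
    have h1 : (k : ℕ) ≤ s := Nat.lt_succ_iff.mp k.isLt
    have h2' : a ⟨0, hs⟩ ≤ a i := hmono (Fin.le_def.mpr (Nat.zero_le _))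
    omega
  set T : Set ((i : Fin s) → Fin (a i)) :=
    {x | ∃ k : Fin (s + 1), ∀ i, (x i : ℕ) = (k : ℕ)} with hT
  -- T is a total dominating set
  have hTDS : IsTotalDominatingSet (prodCompleteGraph a) T := by
    intro v
    have hex : ∃ k : Fin (s+1), ∀ i, (v i : ℕ) ≠ (k : ℕ) := by
      by_contra hcon
      push_neg at hcon
      choose g hg using hcon
      have hinj : Function.Injective g := by
        intro k₁ k₂ h
        apply Fin.ext
        rw [← hg k₁, ← hg k₂, h]
      have := Fintype.card_le_of_injective g hinj
      simp at this
    obtain ⟨k, hk⟩ := hex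
    refine ⟨fun i => ⟨(k : ℕ), hlt k i⟩, ⟨k, fun i => rfl⟩, ?_, ?_⟩
    · intro hcon
      exact hk ⟨0, hs⟩ (by rw [hcon])
    · intro i hcon
      exact hk i (by rw [hcon])
  refine ⟨hTDS, ?_⟩
  -- ncard of T is s+1
  have hg : Function.Injective (fun k : Fin (s+1) => (fun i => ⟨(k:ℕ), hlt k i⟩ : (i : Fin s) → Fin (a i))) := by
    intro k₁ k₂ h
    apply Fin.ext
    have := congrFun h ⟨0, hs⟩
    simpa using congrArg Fin.val this
  have hrange : T = Set.range (fun k : Fin (s+1) => (fun i => ⟨(k:ℕ), hlt k i⟩ : (i : Fin s) → Fin (a i))) := by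
    ext x
    constructor
    · rintro ⟨k, hk⟩
      exact ⟨k, funext fun i => Fin.ext (hk i).symm⟩
    · rintro ⟨k, rfl⟩
      exact ⟨k, fun i => rfl⟩
  have hTcard : T.ncard = s + 1 := by
    rw [hrange, Set.ncard_eq_toFinset_card', Set.toFinset_range, Finset.card_image_of_injective _ hg]
    simp
  -- lower bound
  have hlow : ∀ (S : Set ((i : Fin s) → Fin (a i))),
      IsTotalDominatingSet (prodCompleteGraph a) S → s + 1 ≤ S.ncard := by
    intro S hS
    by_contra hcon
    push_neg at hcon
    haveI : Fintype S := (Set.toFinite S).fintype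
    have hcard : Fintype.card S ≤ s := by
      have := Set.ncard_eq_toFinset_card' S
      rw [Set.toFinset_card] at this
      omega
    obtain ⟨f⟩ : Nonempty (S ↪ Fin s) := by
      rw [Function.Embedding.nonempty_iff_card_le]
      simpa using hcard
    set x : (i : Fin s) → Fin (a i) := fun i =>
      if h : ∃ v : S, f v = i then ((h.choose : S) : (i : Fin s) → Fin (a i)) i
      else ⟨0, hpos i⟩ with hx
    obtain ⟨w, hwS, hadj⟩ := hS x
    have hexw : ∃ v : S, f v = f ⟨w, hwS⟩ := ⟨⟨w, hwS⟩, rfl⟩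
    have : x (f ⟨w, hwS⟩) = w (f ⟨w, hwS⟩) := by
      rw [hx]
      simp only [dif_pos hexw]
      have h1 : hexw.choose = ⟨w, hwS⟩ := f.injective hexw.choose_spec
      rw [h1]
    exact hadj.2 _ this
  -- conclude
  apply le_antisymm
  · exact Nat.sInf_le ⟨T, hTcard, hTDS⟩
  · exact le_csInf ⟨s + 1, T, hTcard, hTDS⟩ (by rintro n ⟨S, rfl, hS⟩; exact hlow S hS)
end

section
/- Let G = ⟨g⟩ be a cyclic group of order n with distinct prime divisors p₁,...,p_r. Then the set consisting of all φ(n) generators of G together with the elements g^{p₁}, ..., g^{p_r} induces a complete subgraph of the generating graph Γ(G); in particular ω(Γ(G)) ≥ φ(n) + r. -/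
open SimpleGraph

theorem stmt_19 (G : Type*) [Group G] [Fintype G] (n : ℕ) (hn : Fintype.card G = n)
    (g : G) (hg : Subgroup.zpowers g = ⊤) :
    (genGraph G).IsClique
      ({x : G | orderOf x = n} ∪ (fun p => g ^ p) '' (n.primeFactors : Set ℕ)) ∧
    Nat.totient n + n.primeFactors.card ≤ (genGraph G).cliqueNum := by
  classical
  have hcyc : IsCyclic G := ⟨g, fun x => by rw [← Subgroup.mem_zpowers_iff, hg]; trivial⟩
  have hgord : orderOf g = n := by
    rw [← hn, ← Nat.card_eq_fintype_card]
    exact orderOf_eq_card_of_forall_mem_zpowers (fun x => by rw [hg]; trivial)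
  have hn0 : n ≠ 0 := by
    rw [← hn]; exact Fintype.card_ne_zero
  -- generators generate
  have hgen : ∀ x : G, orderOf x = n → Subgroup.zpowers x = ⊤ := by
    intro x hx
    apply Subgroup.eq_top_of_card_eq
    rw [Nat.card_zpowers, hx, Nat.card_eq_fintype_card, hn]
  -- order of g^p
  have hordp : ∀ p ∈ n.primeFactors, orderOf (g ^ p) = n / p := by
    intro p hp
    have hpn : p ∣ n := Nat.dvd_of_mem_primeFactors hp
    rw [orderOf_pow_of_dvd (Nat.Prime.ne_zero (Nat.prime_of_mem_primeFactors hp)) (hgord ▸ hpn), hgord]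
  have hordplt : ∀ p ∈ n.primeFactors, orderOf (g ^ p) ≠ n := by
    intro p hp
    rw [hordp p hp]
    have := (Nat.prime_of_mem_primeFactors hp).one_lt
    exact Nat.ne_of_lt (Nat.div_lt_self (Nat.pos_of_ne_zero hn0) this)
  -- adjacency of generator with anything distinct
  have hadjgen : ∀ x y : G, orderOf x = n → x ≠ y → (genGraph G).Adj x y := by
    intro x y hx hne
    refine ⟨hne, top_le_iff.mp ?_⟩
    rw [← hgen x hx, Subgroup.zpowers_eq_closure]
    exact Subgroup.closure_mono (Set.singleton_subset_iff.mpr (Set.mem_insert x {y}))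
  -- adjacency g^p g^q
  have hadjpq : ∀ p ∈ n.primeFactors, ∀ q ∈ n.primeFactors, p ≠ q →
      (genGraph G).Adj (g ^ p) (g ^ q) := by
    intro p hp q hq hpq
    have hne : g ^ p ≠ g ^ q := by
      intro h
      apply hpq
      have h1 := hordp p hp
      have h2 := hordp q hq
      rw [h, h2] at h1
      have := congrArg (n / ·) h1
      simpa [Nat.div_div_self (Nat.dvd_of_mem_primeFactors hq) hn0,
        Nat.div_div_self (Nat.dvd_of_mem_primeFactors hp) hn0] using this.symm
    refine ⟨hne, top_le_iff.mp ?_⟩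
    rw [← hg]
    rintro x ⟨k, rfl⟩
    have hcop : Nat.Coprime p q := (Nat.coprime_primes (Nat.prime_of_mem_primeFactors hp)
      (Nat.prime_of_mem_primeFactors hq)).mpr hpq
    have hg' : g ∈ Subgroup.closure {g ^ p, g ^ q} := by
      have hb := Nat.Coprime.gcd_eq_one hcop
      have : (p : ℤ) * Nat.gcdA p q + (q : ℤ) * Nat.gcdB p q = 1 := by
        have := Nat.gcd_eq_gcd_ab p q
        rw [hb] at this
        push_cast at this ⊢
        linarith
      have heq : g = (g ^ p) ^ Nat.gcdA p q * (g ^ q) ^ Nat.gcdB p q := by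
        rw [← zpow_natCast g p, ← zpow_natCast g q, ← zpow_mul, ← zpow_mul, ← zpow_add, this,
          zpow_one]
      have hmem := mul_mem
        (zpow_mem (Subgroup.subset_closure (show g ^ p ∈ ({g ^ p, g ^ q} : Set G) by simp))
          (Nat.gcdA p q))
        (zpow_mem (Subgroup.subset_closure (show g ^ q ∈ ({g ^ p, g ^ q} : Set G) by simp))
          (Nat.gcdB p q))
      rwa [← heq] at hmem
    exact zpow_mem hg' k
  -- the clique
  have hclique : (genGraph G).IsClique
      ({x : G | orderOf x = n} ∪ (fun p => g ^ p) '' (n.primeFactors : Set ℕ)) := by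
    rintro x (hx | ⟨p, hp, rfl⟩) y (hy | ⟨q, hq, rfl⟩) hne
    · exact hadjgen x y hx hne
    · exact hadjgen x _ hx hne
    · exact ((hadjgen y _ hy hne.symm)).symm
    · refine hadjpq p hp q hq ?_
      rintro rfl; exact hne rfl
  refine ⟨hclique, ?_⟩
  set s : Finset G := (Finset.univ.filter (fun x => orderOf x = n)) ∪
    (n.primeFactors.image (fun p => g ^ p)) with hs
  have hscoe : (s : Set G) ⊆
      {x : G | orderOf x = n} ∪ (fun p => g ^ p) '' (n.primeFactors : Set ℕ) := by
    intro x hx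
    simp only [hs, Finset.coe_union, Finset.coe_filter, Finset.coe_image] at hx
    rcases hx with hx | hx
    · exact Or.inl hx.2
    · exact Or.inr hx
  have hcard : s.card = Nat.totient n + n.primeFactors.card := by
    rw [Finset.card_union_of_disjoint, IsCyclic.card_orderOf_eq_totient (hn ▸ dvd_rfl),
      Finset.card_image_of_injOn]
    · intro p hp q hq hpq
      have hpq' : g ^ p = g ^ q := hpq
      have h1 := hordp p hp
      have h2 := hordp q hq
      rw [hpq', h2] at h1
      have := congrArg (n / ·) h1
      simpa [Nat.div_div_self (Nat.dvd_of_mem_primeFactors hq) hn0,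
        Nat.div_div_self (Nat.dvd_of_mem_primeFactors hp) hn0] using this.symm
    · rw [Finset.disjoint_left]
      rintro x hx hx'
      simp only [Finset.mem_filter] at hx
      simp only [Finset.mem_image] at hx'
      obtain ⟨p, hp, rfl⟩ := hx'
      exact hordplt p hp hx.2
  rw [← hcard]
  exact IsClique.card_le_cliqueNum (tc := hclique.subset hscoe)
end
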